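/- For a connected weighted graph G and any cut C ⊆ E (a set of links whose removal disconnects G), the sum of relative resistances over the cut satisfies Σ_{(i,j)∈C} c_ij·ω_ij ≥ 1. -/
import Mathlib


open Matrix

variable {V : Type*}

/- The weighted Laplacian matrix of a weighted graph `(V, G, c)`:
`Q i i = ∑_{k ∼ i} c i k`, `Q i j = -c i j` for links `i ∼ j`, and `0` otherwise. -/
open Classical in
noncomputable def lapMatrix [Fintype V] (G : SimpleGraph V) (c : V → V → ℝ) :
    Matrix V V ℝ :=
  Matrix.of fun i j =>
    if i = j then ∑ k, if G.Adj i k then c i k else 0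
    else if G.Adj i j then -c i j else 0

/- The four Penrose equations characterizing the Moore–Penrose pseudoinverse. -/
def IsMoorePenroseInv [Fintype V] (Q Qd : Matrix V V ℝ) : Prop :=
  Q * Qd * Q = Q ∧ Qd * Q * Qd = Qd ∧ (Q * Qd)ᵀ = Q * Qd ∧ (Qd * Q)ᵀ = Qd * Q

/- The effective resistance `ω i j = (e_i - e_j)ᵀ Q† (e_i - e_j)`, computed from a
pseudoinverse `Qd` of the Laplacian. -/
open Classical in
noncomputable def effRes [Fintype V] (Qd : Matrix V V ℝ) (i j : V) : ℝ :=
  (Pi.single i 1 - Pi.single j 1) ⬝ᵥ Qd *ᵥ (Pi.single i 1 - Pi.single j 1)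

lemma effRes_symm [Fintype V] (Qd : Matrix V V ℝ) (i j : V) :
    effRes Qd i j = effRes Qd j i := by
  unfold effRes
  simp [Matrix.mulVec_sub]
  ring

/- The relative resistance `c i j * ω i j` as a function on unordered links. -/
noncomputable def relResEdge [Fintype V] (c : V → V → ℝ) (hc : ∀ i j, c i j = c j i)
    (Qd : Matrix V V ℝ) : Sym2 V → ℝ :=
  Sym2.lift ⟨fun i j => c i j * effRes Qd i j, fun a b => by
    show c a b * effRes Qd a b = c b a * effRes Qd b a
    rw [hc a b, effRes_symm]⟩

/- ### Auxiliary lemmas -/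

lemma aux_mp_symm [Fintype V] {Q Qd : Matrix V V ℝ} (hQ : Qᵀ = Q)
    (h : IsMoorePenroseInv Q Qd) : Qdᵀ = Qd := by
  obtain ⟨h1, h2, h3, h4⟩ := h
  have hQY : Q * Qdᵀ = Qd * Q := by
    calc Q * Qdᵀ = Qᵀ * Qdᵀ := by rw [hQ]
    _ = (Qd * Q)ᵀ := by rw [Matrix.transpose_mul]
    _ = Qd * Q := h4
  have hYQ : Qdᵀ * Q = Q * Qd := by
    calc Qdᵀ * Q = Qdᵀ * Qᵀ := by rw [hQ]
    _ = (Q * Qd)ᵀ := by rw [Matrix.transpose_mul]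
    _ = Q * Qd := h3
  have hYQY : Qdᵀ * Q * Qdᵀ = Qdᵀ := by
    have : (Qd * Q * Qd)ᵀ = Qdᵀ * Qᵀ * Qdᵀ := by
      rw [Matrix.transpose_mul, Matrix.transpose_mul]; noncomm_ring
    rw [h2] at this
    rw [hQ] at this
    exact this.symm
  have hQYQ : Q * Qdᵀ * Q = Q := by
    have : (Q * Qd * Q)ᵀ = Qᵀ * Qdᵀ * Qᵀ := by
      rw [Matrix.transpose_mul, Matrix.transpose_mul]; noncomm_ring
    rw [h1] at this
    calc Q * Qdᵀ * Q = Qᵀ * Qdᵀ * Qᵀ := by rw [hQ]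
    _ = Qᵀ := this.symm
    _ = Q := hQ
  have e1 : (Qd * Q) * (Q * Qd) = Q * Qd := by
    calc (Qd * Q) * (Q * Qd) = (Q * Qdᵀ) * (Q * Qd) := by rw [hQY]
    _ = (Q * Qdᵀ * Q) * Qd := by noncomm_ring
    _ = Q * Qd := by rw [hQYQ]
  have e2 : (Qd * Q) * (Q * Qd) = Qd * Q := by
    calc (Qd * Q) * (Q * Qd) = (Qd * Q) * (Qdᵀ * Q) := by rw [hYQ]
    _ = Qd * (Q * Qdᵀ * Q) := by noncomm_ring
    _ = Qd * Q := by rw [hQYQ]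
  have hcomm : Q * Qd = Qd * Q := e1.symm.trans e2
  calc Qdᵀ = Qdᵀ * Q * Qdᵀ := hYQY.symm
  _ = (Q * Qd) * Qdᵀ := by rw [hYQ]
  _ = (Qd * Q) * Qdᵀ := by rw [hcomm]
  _ = Qd * (Q * Qdᵀ) := by noncomm_ring
  _ = Qd * (Qd * Q) := by rw [hQY]
  _ = Qd * (Q * Qd) := by rw [hcomm]
  _ = Qd * Q * Qd := by noncomm_ring
  _ = Qd := h2

lemma aux_lap_symm [Fintype V] (G : SimpleGraph V) (c : V → V → ℝ)
    (hsymm : ∀ i j, c i j = c j i) : (lapMatrix G c)ᵀ = lapMatrix G c := by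
  classical
  ext i j
  simp only [Matrix.transpose_apply, lapMatrix, Matrix.of_apply]
  by_cases h : i = j
  · subst h; simp
  · rw [if_neg (Ne.symm h), if_neg h]
    simp only [G.adj_comm j i, hsymm j i]

lemma aux_lap_mulVec [Fintype V] [DecidableEq V] (G : SimpleGraph V) [DecidableRel G.Adj]
    (c : V → V → ℝ) (x : V → ℝ) (v : V) :
    (lapMatrix G c *ᵥ x) v = ∑ k, (if G.Adj v k then c v k else 0) * (x v - x k) := by
  classical
  have hQ : ∀ j, lapMatrix G c v j =
      (if v = j then (∑ k, if G.Adj v k then c v k else 0) else 0)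
        - (if G.Adj v j then c v j else 0) := by
    intro j
    simp only [lapMatrix, Matrix.of_apply]
    by_cases h : v = j
    · subst h
      rw [if_pos rfl, if_pos rfl, if_neg (G.irrefl (v := v)), sub_zero]
      exact Finset.sum_congr rfl fun k _ => by
        by_cases h : G.Adj v k <;> simp [h]
    · rw [if_neg h, if_neg h]
      by_cases ha : G.Adj v j <;> simp [ha]
  simp only [Matrix.mulVec, dotProduct, hQ, sub_mul, Finset.sum_sub_distrib,
    ite_mul, zero_mul, Finset.sum_ite_eq, Finset.mem_univ, if_true]
  rw [Finset.sum_mul]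
  rw [← Finset.sum_sub_distrib]
  exact Finset.sum_congr rfl fun k _ => by by_cases h : G.Adj v k <;> simp [h] <;> ring

lemma aux_lap_dot [Fintype V] [DecidableEq V] (G : SimpleGraph V) [DecidableRel G.Adj]
    (c : V → V → ℝ) (hsymm : ∀ i j, c i j = c j i) (x : V → ℝ) :
    2 * (x ⬝ᵥ lapMatrix G c *ᵥ x)
      = ∑ v, ∑ k, (if G.Adj v k then c v k else 0) * (x v - x k)^2 := by
  classical
  have hx : x ⬝ᵥ lapMatrix G c *ᵥ x
      = ∑ v, ∑ k, (if G.Adj v k then c v k else 0) * ((x v - x k) * x v) := by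
    simp only [dotProduct, aux_lap_mulVec, Finset.mul_sum]
    exact Finset.sum_congr rfl fun v _ => Finset.sum_congr rfl fun k _ => by ring
  have hswap : x ⬝ᵥ lapMatrix G c *ᵥ x
      = ∑ v, ∑ k, (if G.Adj v k then c v k else 0) * ((x k - x v) * x k) := by
    rw [hx, Finset.sum_comm]
    refine Finset.sum_congr rfl fun v _ => Finset.sum_congr rfl fun k _ => ?_
    by_cases h : G.Adj v k
    · rw [if_pos ((G.adj_comm v k).mp h), if_pos h, hsymm k v]
    · rw [if_neg (fun hk => h ((G.adj_comm v k).mpr hk)), if_neg h]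
  calc 2 * (x ⬝ᵥ lapMatrix G c *ᵥ x)
      = (∑ v, ∑ k, (if G.Adj v k then c v k else 0) * ((x v - x k) * x v))
        + ∑ v, ∑ k, (if G.Adj v k then c v k else 0) * ((x k - x v) * x k) := by
        rw [← hx, ← hswap]; ring
  _ = ∑ v, ∑ k, (if G.Adj v k then c v k else 0) * (x v - x k)^2 := by
      rw [← Finset.sum_add_distrib]
      refine Finset.sum_congr rfl fun v _ => ?_
      rw [← Finset.sum_add_distrib]
      exact Finset.sum_congr rfl fun k _ => by ring

lemma aux_lap_psd [Fintype V] [DecidableEq V] (G : SimpleGraph V) [DecidableRel G.Adj]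
    (c : V → V → ℝ) (hsymm : ∀ i j, c i j = c j i)
    (hpos : ∀ i j, G.Adj i j → 0 < c i j) (x : V → ℝ) :
    0 ≤ x ⬝ᵥ lapMatrix G c *ᵥ x := by
  have h := aux_lap_dot G c hsymm x
  have h2 : 0 ≤ ∑ v, ∑ k, (if G.Adj v k then c v k else 0) * (x v - x k)^2 := by
    refine Finset.sum_nonneg fun v _ => Finset.sum_nonneg fun k _ => ?_
    by_cases ha : G.Adj v k
    · exact mul_nonneg (by simp [ha, (hpos v k ha).le]) (sq_nonneg _)
    · simp [ha]
  linarith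

lemma aux_psd_pinv [Fintype V] {Q Qd : Matrix V V ℝ}
    (hQpsd : ∀ x : V → ℝ, 0 ≤ x ⬝ᵥ Q *ᵥ x) (hQdsym : Qdᵀ = Qd)
    (h2 : Qd * Q * Qd = Qd) (x : V → ℝ) :
    0 ≤ x ⬝ᵥ Qd *ᵥ x := by
  have : x ⬝ᵥ Qd *ᵥ x = (Qd *ᵥ x) ⬝ᵥ Q *ᵥ (Qd *ᵥ x) := by
    conv_lhs => rw [← h2]
    rw [← Matrix.mulVec_mulVec, ← Matrix.mulVec_mulVec]
    rw [Matrix.dotProduct_mulVec x Qd]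
    congr 1
    rw [← Matrix.mulVec_transpose, hQdsym]
  rw [this]
  exact hQpsd _

lemma aux_pair_bound [Fintype V] {Qd : Matrix V V ℝ}
    (hQdpsd : ∀ x : V → ℝ, 0 ≤ x ⬝ᵥ Qd *ᵥ x) (u v : V → ℝ) :
    u ⬝ᵥ Qd *ᵥ v + v ⬝ᵥ Qd *ᵥ u ≤ u ⬝ᵥ Qd *ᵥ u + v ⬝ᵥ Qd *ᵥ v := by
  have h := hQdpsd (u - v)
  rw [Matrix.mulVec_sub, sub_dotProduct, dotProduct_sub,
    dotProduct_sub] at h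
  linarith

lemma aux_exists_crossing {G : SimpleGraph V} {S : V → Prop} :
    ∀ {x y : V}, G.Walk x y → S x → ¬ S y → ∃ i j, G.Adj i j ∧ S i ∧ ¬ S j := by
  intro x y p
  induction p with
  | nil => intro hx hy; exact absurd hx hy
  | @cons x' z y' h p ih =>
    intro hx hy
    by_cases hz : S z
    · exact ih hz hy
    · exact ⟨x', z, h, hx, hz⟩

/- STATEMENT 4 -/
theorem cut_relative_resistance_lower_bound
    [Fintype V] [DecidableEq V] (G : SimpleGraph V) [DecidableRel G.Adj]
    (c : V → V → ℝ) (hsymm : ∀ i j, c i j = c j i)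
    (hpos : ∀ i j, G.Adj i j → 0 < c i j)
    (hconn : G.Connected)
    (Qd : Matrix V V ℝ) (hQd : IsMoorePenroseInv (lapMatrix G c) Qd)
    (C : Finset (Sym2 V)) (hCE : ↑C ⊆ G.edgeSet)
    (hcut : ¬ (G.deleteEdges ↑C).Connected) :
    1 ≤ ∑ e ∈ C, relResEdge c hsymm Qd e := by
  classical
  set Q := lapMatrix G c with hQdef
  have hQsym : Qᵀ = Q := aux_lap_symm G c hsymm
  have hQdsym : Qdᵀ = Qd := aux_mp_symm hQsym hQd
  obtain ⟨h1, h2, h3, h4⟩ := hQd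
  have hQpsd : ∀ x : V → ℝ, 0 ≤ x ⬝ᵥ Q *ᵥ x := aux_lap_psd G c hsymm hpos
  have hQdpsd : ∀ x : V → ℝ, 0 ≤ x ⬝ᵥ Qd *ᵥ x := aux_psd_pinv hQpsd hQdsym h2
  have hpair := aux_pair_bound hQdpsd
  -- disconnectedness gives a "side" S of the cut
  have hprec : ¬ (G.deleteEdges ↑C).Preconnected := by
    intro h
    exact hcut ((SimpleGraph.connected_iff _).mpr ⟨h, hconn.nonempty⟩)
  simp only [SimpleGraph.Preconnected, not_forall] at hprec
  obtain ⟨a, b, hab⟩ := hprec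
  set S : V → Prop := fun v => (G.deleteEdges ↑C).Reachable a v with hSdef
  have hSa : S a := SimpleGraph.Reachable.refl a
  have hSb : ¬ S b := hab
  set f : V → ℝ := fun v => if S v then 1 else 0 with hfdef
  have hf01 : ∀ v, f v = 0 ∨ f v = 1 := fun v => by
    by_cases h : S v <;> simp [hfdef, h]
  set w : V → V → ℝ :=
    fun i j => (if G.Adj i j then c i j else 0) * (f i * (1 - f j)) with hwdef
  have hwchar : ∀ i j, w i j = if G.Adj i j ∧ S i ∧ ¬ S j then c i j else 0 := by
    intro i j
    by_cases ha : G.Adj i j <;> by_cases hi : S i <;> by_cases hj : S j <;>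
      simp [hwdef, hfdef, ha, hi, hj]
  have hw_nonneg : ∀ i j, 0 ≤ w i j := by
    intro i j
    rw [hwchar]
    split
    · exact (hpos i j (by tauto)).le
    · exact le_rfl
  have hcross : ∀ i j, G.Adj i j → S i → ¬ S j → s(i,j) ∈ C := by
    intro i j ha hi hj
    by_contra hC
    exact hj (hi.trans (SimpleGraph.Adj.reachable (by
      rw [SimpleGraph.deleteEdges_adj]
      exact ⟨ha, hC⟩)))
  set u : V → V → (V → ℝ) := fun i j => Pi.single i 1 - Pi.single j 1 with hudef
  set g : V → ℝ := Q *ᵥ f with hgdef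
  -- g as a sum of edge vectors
  have hg : g = ∑ p : V × V, w p.1 p.2 • u p.1 p.2 := by
    funext v
    have lhs : g v = ∑ k, (w v k - w k v) := by
      rw [hgdef, hQdef, aux_lap_mulVec]
      refine Finset.sum_congr rfl fun k _ => ?_
      have hsw : (if G.Adj k v then c k v else 0) = (if G.Adj v k then c v k else 0) := by
        by_cases h : G.Adj v k
        · rw [if_pos ((G.adj_comm v k).mp h), if_pos h, hsymm k v]
        · rw [if_neg (fun hk => h ((G.adj_comm v k).mpr hk)), if_neg h]
      rw [hwdef]
      simp only
      rw [hsw]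
      ring
    rw [lhs, Finset.sum_sub_distrib]
    rw [Finset.sum_apply]
    simp only [Pi.smul_apply, hudef, Pi.sub_apply, smul_eq_mul, Pi.single_apply]
    rw [Fintype.sum_prod_type]
    have hwii : ∀ i, w i i = 0 := fun i => by simp [hwdef, G.irrefl (v := i)]
    have hsplit : ∀ i j : V, w i j * ((if v = i then (1:ℝ) else 0) - (if v = j then 1 else 0))
        = (if v = i then w i j else 0) - (if v = j then w i j else 0) := fun i j => by
      by_cases hij : i = j
      · subst hij; simp [hwii]
      · by_cases hI : v = i <;> by_cases hJ : v = j <;>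
          simp [hI, hJ, hij, Ne.symm hij]
    simp only [hsplit, Finset.sum_sub_distrib]
    congr 1
    · rw [Finset.sum_comm]
      simp
    · simp
  -- sum helpers
  have hdl : ∀ (φ : (V × V) → (V → ℝ)) (y : V → ℝ),
      (∑ p : V × V, φ p) ⬝ᵥ y = ∑ p : V × V, φ p ⬝ᵥ y := by
    intro φ y
    simp only [dotProduct, Finset.sum_apply, Finset.sum_mul]
    exact Finset.sum_comm
  have hdr : ∀ (y : V → ℝ) (ψ : (V × V) → (V → ℝ)),
      y ⬝ᵥ (∑ p : V × V, ψ p) = ∑ p : V × V, y ⬝ᵥ ψ p := by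
    intro y ψ
    simp only [dotProduct, Finset.sum_apply, Finset.mul_sum]
    exact Finset.sum_comm
  have hmv : ∀ (φ : (V × V) → (V → ℝ)),
      Qd *ᵥ (∑ p : V × V, φ p) = ∑ p : V × V, Qd *ᵥ φ p := by
    intro φ
    funext x
    simp only [Matrix.mulVec, dotProduct, Finset.sum_apply, Finset.mul_sum]
    exact Finset.sum_comm
  -- κ and R
  set κ : ℝ := ∑ p : V × V, w p.1 p.2 with hκdef
  set R : ℝ := ∑ p : V × V, w p.1 p.2 * effRes Qd p.1 p.2 with hRdef
  have hueff : ∀ i j, u i j ⬝ᵥ Qd *ᵥ u i j = effRes Qd i j := fun i j => by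
    rw [hudef]
    simp only [effRes]
    congr!
  have hκg : f ⬝ᵥ g = κ := by
    have hterm : ∀ v, f v * g v = ∑ k, w v k := by
      intro v
      rw [hgdef, hQdef, aux_lap_mulVec, Finset.mul_sum]
      refine Finset.sum_congr rfl fun k _ => ?_
      rw [hwdef]
      simp only
      rcases hf01 v with h | h <;> rcases hf01 k with h' | h' <;> rw [h, h'] <;> ring
    rw [hκdef, Fintype.sum_prod_type]
    exact Finset.sum_congr rfl fun v _ => hterm v
  have hBg : g ⬝ᵥ Qd *ᵥ g = f ⬝ᵥ g := by
    have hvm : Q *ᵥ f = f ᵥ* Q := by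
      rw [← Matrix.mulVec_transpose, hQsym]
    calc g ⬝ᵥ Qd *ᵥ g = (Q *ᵥ f) ⬝ᵥ ((Qd * Q) *ᵥ f) := by
          rw [hgdef, Matrix.mulVec_mulVec]
    _ = ((f ᵥ* Q) ᵥ* (Qd * Q)) ⬝ᵥ f := by rw [hvm, Matrix.dotProduct_mulVec]
    _ = (f ᵥ* (Q * (Qd * Q))) ⬝ᵥ f := by rw [Matrix.vecMul_vecMul]
    _ = (f ᵥ* Q) ⬝ᵥ f := by rw [← mul_assoc, h1]
    _ = (Q *ᵥ f) ⬝ᵥ f := by rw [hvm]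
    _ = f ⬝ᵥ g := by rw [hgdef, dotProduct_comm]
  have hBexp : g ⬝ᵥ Qd *ᵥ g
      = ∑ p : V × V, ∑ q : V × V,
          w p.1 p.2 * w q.1 q.2 * (u p.1 p.2 ⬝ᵥ Qd *ᵥ u q.1 q.2) := by
    rw [hg, hmv, hdl]
    refine Finset.sum_congr rfl fun p _ => ?_
    rw [hdr]
    refine Finset.sum_congr rfl fun q _ => ?_
    rw [Matrix.mulVec_smul, dotProduct_smul, smul_dotProduct]
    simp only [smul_eq_mul]
    ring
  -- the key inequality 2κ ≤ 2κR
  have key : 2 * (g ⬝ᵥ Qd *ᵥ g) ≤ 2 * (κ * R) := by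
    rw [hBexp]
    have hswap : (∑ p : V × V, ∑ q : V × V,
          w p.1 p.2 * w q.1 q.2 * (u p.1 p.2 ⬝ᵥ Qd *ᵥ u q.1 q.2))
        = ∑ p : V × V, ∑ q : V × V,
          w q.1 q.2 * w p.1 p.2 * (u q.1 q.2 ⬝ᵥ Qd *ᵥ u p.1 p.2) :=
      Finset.sum_comm
    calc 2 * (∑ p : V × V, ∑ q : V × V,
          w p.1 p.2 * w q.1 q.2 * (u p.1 p.2 ⬝ᵥ Qd *ᵥ u q.1 q.2))
        = ∑ p : V × V, ∑ q : V × V,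
          (w p.1 p.2 * w q.1 q.2 * (u p.1 p.2 ⬝ᵥ Qd *ᵥ u q.1 q.2)
            + w q.1 q.2 * w p.1 p.2 * (u q.1 q.2 ⬝ᵥ Qd *ᵥ u p.1 p.2)) := by
          simp only [Finset.sum_add_distrib]
          rw [← hswap]
          ring
    _ ≤ ∑ p : V × V, ∑ q : V × V,
          w p.1 p.2 * w q.1 q.2 * (effRes Qd p.1 p.2 + effRes Qd q.1 q.2) := by
        refine Finset.sum_le_sum fun p _ => Finset.sum_le_sum fun q _ => ?_
        have hb := hpair (u p.1 p.2) (u q.1 q.2)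
        rw [hueff, hueff] at hb
        have hwn : 0 ≤ w p.1 p.2 * w q.1 q.2 :=
          mul_nonneg (hw_nonneg _ _) (hw_nonneg _ _)
        calc w p.1 p.2 * w q.1 q.2 * (u p.1 p.2 ⬝ᵥ Qd *ᵥ u q.1 q.2)
              + w q.1 q.2 * w p.1 p.2 * (u q.1 q.2 ⬝ᵥ Qd *ᵥ u p.1 p.2)
            = w p.1 p.2 * w q.1 q.2
              * ((u p.1 p.2 ⬝ᵥ Qd *ᵥ u q.1 q.2) + (u q.1 q.2 ⬝ᵥ Qd *ᵥ u p.1 p.2)) := by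
              ring
        _ ≤ w p.1 p.2 * w q.1 q.2 * (effRes Qd p.1 p.2 + effRes Qd q.1 q.2) :=
            mul_le_mul_of_nonneg_left hb hwn
    _ = 2 * (κ * R) := by
        have e : ∀ p : V × V, (∑ q : V × V,
            w p.1 p.2 * w q.1 q.2 * (effRes Qd p.1 p.2 + effRes Qd q.1 q.2))
            = w p.1 p.2 * effRes Qd p.1 p.2 * κ + w p.1 p.2 * R := by
          intro p
          rw [hκdef, hRdef, Finset.mul_sum, Finset.mul_sum, ← Finset.sum_add_distrib]
          exact Finset.sum_congr rfl fun q _ => by ring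
        rw [Finset.sum_congr rfl fun p _ => e p, Finset.sum_add_distrib,
          ← Finset.sum_mul, ← Finset.sum_mul, ← hRdef, ← hκdef]
        ring
  have hκκR : κ ≤ κ * R := by
    have h' := hBg.trans hκg
    linarith [key, h']
  -- κ is positive
  obtain ⟨p⟩ := hconn.preconnected a b
  obtain ⟨x, y, hxy, hx, hy⟩ := aux_exists_crossing p hSa hSb
  have hκpos : 0 < κ := by
    rw [hκdef]
    refine Finset.sum_pos' (fun q _ => hw_nonneg _ _) ⟨(x, y), Finset.mem_univ _, ?_⟩
    rw [hwchar, if_pos ⟨hxy, hx, hy⟩]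
    exact hpos x y hxy
  have hR1 : 1 ≤ R := by
    by_contra hR
    push_neg at hR
    have : κ * R < κ * 1 := mul_lt_mul_of_pos_left hR hκpos
    linarith
  -- R is at most the sum over the cut
  have hRle : R ≤ ∑ e ∈ C, relResEdge c hsymm Qd e := by
    have hterm : ∀ p : V × V, w p.1 p.2 * effRes Qd p.1 p.2
        = if G.Adj p.1 p.2 ∧ S p.1 ∧ ¬ S p.2
            then relResEdge c hsymm Qd s(p.1, p.2) else 0 := by
      intro p
      obtain ⟨i, j⟩ := p
      rw [hwchar]
      split
      · simp [relResEdge]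
      · simp
    rw [hRdef, Finset.sum_congr rfl fun p _ => hterm p, ← Finset.sum_filter]
    set T : Finset (V × V) :=
      Finset.univ.filter (fun p : V × V => G.Adj p.1 p.2 ∧ S p.1 ∧ ¬ S p.2) with hTdef
    have hinj : ∀ p ∈ T, ∀ q ∈ T, s(p.1, p.2) = s(q.1, q.2) → p = q := by
      intro p hp q hq hpq
      rw [hTdef, Finset.mem_filter] at hp hq
      rw [Sym2.eq_iff] at hpq
      rcases hpq with ⟨hx1, hx2⟩ | ⟨hx1, hx2⟩
      · exact Prod.ext hx1 hx2
      · exact absurd (hx1 ▸ hp.2.2.1) hq.2.2.2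
    rw [← Finset.sum_image hinj]
    refine Finset.sum_le_sum_of_subset_of_nonneg ?_ ?_
    · intro e he
      rw [Finset.mem_image] at he
      obtain ⟨q, hq, rfl⟩ := he
      rw [hTdef, Finset.mem_filter] at hq
      exact hcross q.1 q.2 hq.2.1 hq.2.2.1 hq.2.2.2
    · intro e he _
      have heE : e ∈ G.edgeSet := hCE he
      induction e using Sym2.ind with
      | _ i j =>
        rw [SimpleGraph.mem_edgeSet] at heE
        have h0 : (0:ℝ) ≤ effRes Qd i j := hQdpsd _
        have : relResEdge c hsymm Qd s(i, j) = c i j * effRes Qd i j := by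
          simp [relResEdge]
        rw [this]
        exact mul_nonneg (hpos i j heE).le h0
  linarith
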